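/- arXiv:2001.10236 — 6 statements merged into one kernel-verified Lean document; each statement's English description precedes it below -/
import Mathlib

section
/- Let A → B → E → 0 be an exact sequence of abelian groups and let ℓ be a prime number. If the ℓ-torsion subgroup _ℓ E is finite, then the induced sequence A^(ℓ) → B^(ℓ) → E^(ℓ) → 0 of ℓ-adic completions is exact, i.e. the second map is surjective and the image of the first map equals the kernel of the second. (Lemma 'exactcomp' b), first case.) -/
/-- The subgroup `nA = {n·a : a ∈ A}` of an abelian group `A`. -/
def nSub (A : Type*) [AddCommGroup A] (n : ℕ) : AddSubgroup A where
  carrier := Set.range fun a : A => n • a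
  zero_mem' := ⟨0, smul_zero n⟩
  add_mem' := by rintro x y ⟨a, rfl⟩ ⟨b, rfl⟩; exact ⟨a + b, smul_add n a b⟩
  neg_mem' := by rintro x ⟨a, rfl⟩; exact ⟨-a, smul_neg n a⟩

theorem nSub_le {A : Type*} [AddCommGroup A] {n m : ℕ} (h : n ∣ m) :
    nSub A m ≤ nSub A n := by
  rintro x ⟨a, rfl⟩
  obtain ⟨c, rfl⟩ := h
  exact ⟨c • a, (mul_smul n c a).symm⟩

/-- The natural projection `A/mA → A/nA` when `n ∣ m`. -/
def projMap {A : Type*} [AddCommGroup A] {n m : ℕ} (h : n ∣ m) :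
    A ⧸ nSub A m →+ A ⧸ nSub A n :=
  QuotientAddGroup.map _ _ (AddMonoidHom.id A) fun _x hx => nSub_le h hx

/-- The ℓ-adic completion `A^(ℓ) = lim_m A/ℓ^m A`, as the subgroup of compatible
families in `Π m, A/ℓ^m A` (along the natural projection maps). -/
def AdicComp (ℓ : ℕ) (A : Type*) [AddCommGroup A] :
    AddSubgroup (∀ m : ℕ, A ⧸ nSub A (ℓ ^ m)) where
  carrier := {f | ∀ m : ℕ, projMap (pow_dvd_pow ℓ (Nat.le_succ m)) (f (m + 1)) = f m}
  zero_mem' := fun _m => map_zero _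
  add_mem' := by
    intro f g hf hg m
    simp only [Pi.add_apply, map_add, hf m, hg m]
  neg_mem' := by
    intro f hf m
    simp only [Pi.neg_apply, map_neg, hf m]

/-- The map `A/nA → B/nB` induced by a homomorphism `φ : A → B`. -/
def qMap {A B : Type*} [AddCommGroup A] [AddCommGroup B] (φ : A →+ B) (n : ℕ) :
    A ⧸ nSub A n →+ B ⧸ nSub B n :=
  QuotientAddGroup.map _ _ φ (by rintro x ⟨a, rfl⟩; exact ⟨φ a, by simp⟩)

theorem projMap_qMap {A B : Type*} [AddCommGroup A] [AddCommGroup B] (φ : A →+ B)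
    {n m : ℕ} (h : n ∣ m) (x : A ⧸ nSub A m) :
    projMap h (qMap φ m x) = qMap φ n (projMap h x) :=
  QuotientAddGroup.induction_on x fun _a => rfl

/-- The homomorphism `A^(ℓ) → B^(ℓ)` between ℓ-adic completions induced by a
homomorphism `φ : A → B`. -/
def adicMap {A B : Type*} [AddCommGroup A] [AddCommGroup B] (ℓ : ℕ) (φ : A →+ B) :
    ↥(AdicComp ℓ A) →+ ↥(AdicComp ℓ B) where
  toFun f := ⟨fun m => qMap φ (ℓ ^ m) (f.1 m), fun m => by
    show projMap (pow_dvd_pow ℓ (Nat.le_succ m)) (qMap φ (ℓ ^ (m + 1)) (f.1 (m + 1)))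
      = qMap φ (ℓ ^ m) (f.1 m)
    rw [projMap_qMap, f.2 m]⟩
  map_zero' := by
    apply Subtype.ext; funext m; exact map_zero _
  map_add' f g := by
    apply Subtype.ext; funext m; exact map_add _ _ _


theorem qMap_surjective {A B : Type*} [AddCommGroup A] [AddCommGroup B]
    (φ : A →+ B) (hφ : Function.Surjective φ) (n : ℕ) :
    Function.Surjective (qMap φ n) := by
  intro y
  refine QuotientAddGroup.induction_on y fun b => ?_
  obtain ⟨a, rfl⟩ := hφ b
  exact ⟨QuotientAddGroup.mk a, rfl⟩

/-- Chain construction: surjectivity of `adicMap` from levelwise surjectivity plus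
liftability of kernel elements one step up. -/
theorem adicMap_surjective {X Y : Type*} [AddCommGroup X] [AddCommGroup Y] (ℓ : ℕ)
    (φ : X →+ Y) (hφ : Function.Surjective φ)
    (hker : ∀ m (d : X ⧸ nSub X (ℓ ^ m)), qMap φ (ℓ ^ m) d = (0 : Y ⧸ nSub Y (ℓ ^ m)) →
      ∃ z : X ⧸ nSub X (ℓ ^ (m + 1)), qMap φ (ℓ ^ (m + 1)) z = (0 : Y ⧸ nSub Y (ℓ ^ (m + 1))) ∧
        projMap (pow_dvd_pow ℓ (Nat.le_succ m)) z = d) :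
    Function.Surjective (adicMap ℓ φ) := by
  intro y
  have base : {b : X ⧸ nSub X (ℓ ^ 0) // qMap φ (ℓ ^ 0) b = y.1 0} := by
    obtain h := qMap_surjective φ hφ (ℓ ^ 0) (y.1 0)
    exact ⟨h.choose, h.choose_spec⟩
  have step : ∀ m (p : {b : X ⧸ nSub X (ℓ ^ m) // qMap φ (ℓ ^ m) b = y.1 m}),
      {q : {b : X ⧸ nSub X (ℓ ^ (m + 1)) // qMap φ (ℓ ^ (m + 1)) b = y.1 (m + 1)} //
        projMap (pow_dvd_pow ℓ (Nat.le_succ m)) q.1 = p.1} := by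
    intro m p
    obtain hb' := qMap_surjective φ hφ (ℓ ^ (m + 1)) (y.1 (m + 1))
    set b' := hb'.choose with hb'def
    have hb'spec : qMap φ (ℓ ^ (m + 1)) b' = y.1 (m + 1) := hb'.choose_spec
    have hd : qMap φ (ℓ ^ m) (p.1 - projMap (pow_dvd_pow ℓ (Nat.le_succ m)) b')
        = (0 : Y ⧸ nSub Y (ℓ ^ m)) := by
      rw [map_sub, p.2, ← projMap_qMap, hb'spec, y.2 m, sub_self]
    have hz := hker m _ hd
    refine ⟨⟨b' + hz.choose, ?_⟩, ?_⟩
    · rw [map_add, hb'spec, hz.choose_spec.1, add_zero]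
    · rw [map_add, hz.choose_spec.2]
      abel
  let chain : ∀ m, {b : X ⧸ nSub X (ℓ ^ m) // qMap φ (ℓ ^ m) b = y.1 m} :=
    fun m => Nat.rec base (fun m p => (step m p).1) m
  have hchain : ∀ m, projMap (pow_dvd_pow ℓ (Nat.le_succ m)) (chain (m + 1)).1
      = (chain m).1 := fun m => (step m (chain m)).2
  refine ⟨⟨fun m => (chain m).1, hchain⟩, ?_⟩
  apply Subtype.ext
  funext m
  exact (chain m).2

/-- Finiteness of `ℓ^m`-torsion from finiteness of `ℓ`-torsion. -/
theorem pow_torsion_finite {E : Type*} [AddCommGroup E] (ℓ : ℕ)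
    (htors : {x : E | ℓ • x = 0}.Finite) (m : ℕ) :
    {x : E | (ℓ ^ m) • x = 0}.Finite := by
  induction m with
  | zero =>
    have : {x : E | (ℓ ^ 0) • x = 0} ⊆ {(0 : E)} := by
      intro x hx
      simpa using hx
    exact Set.Finite.subset (Set.finite_singleton 0) this
  | succ m ih =>
    have hsub : {x : E | (ℓ ^ (m + 1)) • x = 0} ⊆
        ⋃ y ∈ {x : E | (ℓ ^ m) • x = 0}, {x : E | ℓ • x = y} := by
      intro x hx
      simp only [Set.mem_iUnion, Set.mem_setOf_eq]
      refine ⟨ℓ • x, ?_, rfl⟩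
      rw [← mul_smul]
      have : ℓ ^ m * ℓ = ℓ ^ (m + 1) := by ring
      rw [this]
      exact hx
    refine Set.Finite.subset (Set.Finite.biUnion ih fun y _ => ?_) hsub
    rcases Set.eq_empty_or_nonempty {x : E | ℓ • x = y} with h | ⟨x₀, hx₀⟩
    · simp [h]
    · have : {x : E | ℓ • x = y} ⊆ (fun z => x₀ + z) '' {x : E | ℓ • x = 0} := by
        intro x hx
        refine ⟨x - x₀, ?_, by show x₀ + (x - x₀) = x; rw [add_comm, sub_add_cancel]⟩
        have hx' : ℓ • x = y := hx
        have hx₀' : ℓ • x₀ = y := hx₀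
        simp only [Set.mem_setOf_eq, smul_sub, hx', hx₀', sub_self]
      exact Set.Finite.subset (htors.image _) this

theorem qMap_mk {A B : Type*} [AddCommGroup A] [AddCommGroup B] (φ : A →+ B) (n : ℕ)
    (a : A) : qMap φ n (QuotientAddGroup.mk a) = QuotientAddGroup.mk (φ a) := rfl

theorem projMap_mk {A : Type*} [AddCommGroup A] {n m : ℕ} (h : n ∣ m) (a : A) :
    projMap h (QuotientAddGroup.mk a : A ⧸ nSub A m)
      = (QuotientAddGroup.mk a : A ⧸ nSub A n) := rfl

theorem projMap_id' {A : Type*} [AddCommGroup A] {n : ℕ} (h : n ∣ n) (x : A ⧸ nSub A n) :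
    projMap h x = x :=
  QuotientAddGroup.induction_on x fun _a => rfl

theorem projMap_comp' {A : Type*} [AddCommGroup A] {n m k : ℕ} (h1 : n ∣ m) (h2 : m ∣ k)
    (h3 : n ∣ k) (x : A ⧸ nSub A k) :
    projMap h1 (projMap h2 x) = projMap h3 x :=
  QuotientAddGroup.induction_on x fun _a => rfl

theorem qMap_comp' {A B C : Type*} [AddCommGroup A] [AddCommGroup B] [AddCommGroup C]
    (φ : A →+ B) (ψ : B →+ C) (n : ℕ) (x : A ⧸ nSub A n) :
    qMap ψ n (qMap φ n x) = qMap (ψ.comp φ) n x :=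
  QuotientAddGroup.induction_on x fun _a => rfl

theorem qMap_zero {A B : Type*} [AddCommGroup A] [AddCommGroup B] (n : ℕ)
    (x : A ⧸ nSub A n) : qMap (0 : A →+ B) n x = (0 : B ⧸ nSub B n) :=
  QuotientAddGroup.induction_on x fun a => by
    rw [qMap_mk]
    exact (QuotientAddGroup.eq_zero_iff _).mpr (zero_mem _)

theorem projMap_surjective' {A : Type*} [AddCommGroup A] {n m : ℕ} (h : n ∣ m) :
    Function.Surjective (projMap (A := A) h) := fun y =>
  QuotientAddGroup.induction_on y fun a => ⟨QuotientAddGroup.mk a, rfl⟩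

/-- Compatibility of the components of an element of the adic completion along
arbitrary projections. -/
theorem adic_compat {X : Type*} [AddCommGroup X] (ℓ : ℕ) (y : ↥(AdicComp ℓ X))
    {n m : ℕ} (h : n ≤ m) : projMap (pow_dvd_pow ℓ h) (y.1 m) = y.1 n := by
  induction h with
  | refl => exact projMap_id' _ _
  | @step m h ih =>
    rw [← projMap_comp' (pow_dvd_pow ℓ h) (pow_dvd_pow ℓ (Nat.le_succ m))
      (pow_dvd_pow ℓ (Nat.le_succ_of_le h)), y.2 m, ih]

/-- Levelwise right exactness: `A/nA → B/nB → E/nE` is exact. -/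
theorem level_exact {A B E : Type*} [AddCommGroup A] [AddCommGroup B] [AddCommGroup E]
    (f : A →+ B) (g : B →+ E) (hfg : Function.Exact ⇑f ⇑g) (hg : Function.Surjective ⇑g)
    (n : ℕ) (d : B ⧸ nSub B n) (hd : qMap g n d = (0 : E ⧸ nSub E n)) :
    ∃ a : A ⧸ nSub A n, qMap f n a = d := by
  revert hd
  refine QuotientAddGroup.induction_on d fun b hd => ?_
  have hb : g b ∈ nSub E n := (QuotientAddGroup.eq_zero_iff _).mp hd
  obtain ⟨e, he⟩ := hb
  obtain ⟨b'', rfl⟩ := hg e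
  have he' : n • g b'' = g b := he
  have h0 : g (b - n • b'') = 0 := by
    rw [map_sub, map_nsmul, he', sub_self]
  obtain ⟨a, ha⟩ := (hfg _).mp h0
  refine ⟨QuotientAddGroup.mk a, ?_⟩
  rw [qMap_mk, ha, QuotientAddGroup.eq_iff_sub_mem]
  have : b - n • b'' - b = -(n • b'') := by abel
  rw [this]
  exact neg_mem ⟨b'', rfl⟩

/-- The fibers of `K/nK → B/nB` for `K = ker g` are finite when the `n`-torsion
of `E` is finite. -/
theorem ker_fiber_finite {B E : Type*} [AddCommGroup B] [AddCommGroup E]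
    (g : B →+ E) (hg : Function.Surjective ⇑g) (n : ℕ)
    (htors : {x : E | n • x = 0}.Finite) (w : B ⧸ nSub B n) :
    Finite {c : ↥g.ker ⧸ nSub ↥g.ker n // qMap g.ker.subtype n c = w} := by
  -- first the zero fiber
  have hzero : Finite {c : ↥g.ker ⧸ nSub ↥g.ker n //
      qMap g.ker.subtype n c = (0 : B ⧸ nSub B n)} := by
    have : Finite {x : E // n • x = 0} := htors.to_subtype
    refine Finite.of_surjective (f := fun x : {x : E // n • x = 0} =>
      (⟨QuotientAddGroup.mk ⟨n • (hg x.1).choose, ?_⟩, ?_⟩ :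
        {c : ↥g.ker ⧸ nSub ↥g.ker n // qMap g.ker.subtype n c = (0 : B ⧸ nSub B n)})) ?_
    · rw [AddMonoidHom.mem_ker, map_nsmul, (hg x.1).choose_spec]
      exact x.2
    · rw [qMap_mk]
      exact (QuotientAddGroup.eq_zero_iff _).mpr ⟨(hg x.1).choose, rfl⟩
    · rintro ⟨c, hc⟩
      revert hc
      refine QuotientAddGroup.induction_on c fun k hk => ?_
      rw [qMap_mk] at hk
      obtain ⟨b, hb⟩ := (QuotientAddGroup.eq_zero_iff _).mp hk
      have hb' : n • b = (k : B) := hb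
      have hx : n • g b = 0 := by
        rw [← map_nsmul, hb']
        exact k.2
      refine ⟨⟨g b, hx⟩, ?_⟩
      apply Subtype.ext
      rw [QuotientAddGroup.eq_iff_sub_mem]
      have hgb' : g ((hg (g b)).choose) = g b := (hg (g b)).choose_spec
      refine ⟨⟨(hg (g b)).choose - b, ?_⟩, ?_⟩
      · rw [AddMonoidHom.mem_ker, map_sub, hgb', sub_self]
      · apply Subtype.ext
        show n • ((hg (g b)).choose - b) = n • (hg (g b)).choose - (k : B)
        rw [smul_sub, hb']
  -- now an arbitrary fiber
  rcases isEmpty_or_nonempty {c : ↥g.ker ⧸ nSub ↥g.ker n // qMap g.ker.subtype n c = w}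
    with h | ⟨⟨c₀, hc₀⟩⟩
  · exact Finite.of_subsingleton
  · refine Finite.of_injective (β := {c : ↥g.ker ⧸ nSub ↥g.ker n //
      qMap g.ker.subtype n c = (0 : B ⧸ nSub B n)})
      (fun c => ⟨c.1 - c₀, by rw [map_sub, c.2, hc₀, sub_self]⟩) ?_
    intro c c' hcc
    have := congrArg Subtype.val hcc
    simp only [sub_left_inj] at this
    exact Subtype.ext this

open CategoryTheory Opposite in
/-- If `A → B → E → 0` is an exact sequence of abelian groups, `ℓ` is a prime and the
ℓ-torsion subgroup of `E` is finite, then the induced sequence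
`A^(ℓ) → B^(ℓ) → E^(ℓ) → 0` of ℓ-adic completions is exact: the second map is
surjective and the image of the first map equals the kernel of the second. -/
theorem statement_1 {A B E : Type*} [AddCommGroup A] [AddCommGroup B] [AddCommGroup E]
    (ℓ : ℕ) (hℓ : ℓ.Prime) (f : A →+ B) (g : B →+ E)
    (hfg : Function.Exact ⇑f ⇑g) (hg : Function.Surjective ⇑g)
    (htors : {x : E | ℓ • x = 0}.Finite) :
    Function.Surjective ⇑(adicMap ℓ g) ∧
      Function.Exact ⇑(adicMap ℓ f) ⇑(adicMap ℓ g) := by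
  classical
  have hgf0 : g.comp f = 0 := by
    ext a
    exact hfg.apply_apply_eq_zero a
  -- the kernel subgroup of g and associated maps
  set ι : ↥g.ker →+ B := g.ker.subtype with hι
  have hmemker : ∀ a : A, f a ∈ g.ker := fun a =>
    AddMonoidHom.mem_ker.mpr (hfg.apply_apply_eq_zero a)
  set f' : A →+ ↥g.ker := f.codRestrict g.ker hmemker with hf'
  have hιf' : ι.comp f' = f := by
    ext a
    rfl
  have hf'surj : Function.Surjective ⇑f' := by
    rintro ⟨b, hb⟩
    obtain ⟨a, ha⟩ := (hfg b).mp (AddMonoidHom.mem_ker.mp hb)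
    exact ⟨a, Subtype.ext ha⟩
  -- surjectivity of adicMap g
  have hsurj : Function.Surjective ⇑(adicMap ℓ g) := by
    apply adicMap_surjective ℓ g hg
    intro m d hd
    obtain ⟨aq, haq⟩ := level_exact f g hfg hg (ℓ ^ m) d hd
    obtain ⟨aq', haq'⟩ := projMap_surjective' (pow_dvd_pow ℓ (Nat.le_succ m)) aq
    refine ⟨qMap f (ℓ ^ (m + 1)) aq', ?_, ?_⟩
    · rw [qMap_comp', hgf0, qMap_zero]
    · rw [projMap_qMap, haq', haq]
  refine ⟨hsurj, fun y => ⟨?_, ?_⟩⟩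
  · -- kernel ⊆ range
    intro hy
    have hyc : ∀ m, qMap g (ℓ ^ m) (y.1 m) = (0 : E ⧸ nSub E (ℓ ^ m)) := by
      intro m
      have := congrArg (fun z : ↥(AdicComp ℓ E) => z.1 m) hy
      exact this
    -- the inverse system of fibers in K/ℓ^m K
    let F : ℕᵒᵖ ⥤ Type _ :=
      { obj := fun m => {c : ↥g.ker ⧸ nSub ↥g.ker (ℓ ^ m.unop) //
          qMap ι (ℓ ^ m.unop) c = y.1 m.unop}
        map := fun {m n} h => TypeCat.ofHom fun c => ⟨projMap (pow_dvd_pow ℓ h.unop.le) c.1, by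
          rw [← projMap_qMap, c.2]
          exact adic_compat ℓ y h.unop.le⟩
        map_id := fun m => by
          apply ConcreteCategory.hom_ext; intro c
          exact Subtype.ext (projMap_id' _ _)
        map_comp := fun {m n p} h1 h2 => by
          apply ConcreteCategory.hom_ext; intro c
          exact Subtype.ext (projMap_comp' _ _ _ _).symm }
    haveI hFfin : ∀ j : ℕᵒᵖ, Finite (F.obj j) := fun j =>
      ker_fiber_finite g hg (ℓ ^ j.unop) (pow_torsion_finite ℓ htors j.unop) (y.1 j.unop)
    haveI hFne : ∀ j : ℕᵒᵖ, Nonempty (F.obj j) := by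
      intro j
      obtain ⟨a, ha⟩ := level_exact f g hfg hg (ℓ ^ j.unop) (y.1 j.unop) (hyc j.unop)
      refine ⟨⟨qMap f' (ℓ ^ j.unop) a, ?_⟩⟩
      rw [qMap_comp', hιf', ha]
    obtain ⟨s, hs⟩ := nonempty_sections_of_finite_inverse_system F
    have hcompat : ∀ m : ℕ, projMap (pow_dvd_pow ℓ (Nat.le_succ m))
        ((s (op (m + 1))).1) = (s (op m)).1 := by
      intro m
      have := hs (homOfLE (Nat.le_succ m)).op
      exact congrArg Subtype.val this
    set k : ↥(AdicComp ℓ ↥g.ker) := ⟨fun m => (s (op m)).1, hcompat⟩ with hk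
    -- lift k through adicMap f'
    have hlift : ∃ a : ↥(AdicComp ℓ A), adicMap ℓ f' a = k := by
      apply adicMap_surjective ℓ f' hf'surj
      intro m d hd
      revert hd
      refine QuotientAddGroup.induction_on d fun a hd => ?_
      rw [qMap_mk] at hd
      obtain ⟨κ, hκ⟩ := (QuotientAddGroup.eq_zero_iff _).mp hd
      have hκ' : (ℓ ^ m) • κ = f' a := hκ
      obtain ⟨a'', ha''⟩ := hf'surj κ
      refine ⟨QuotientAddGroup.mk (a - (ℓ ^ m) • a''), ?_, ?_⟩
      · rw [qMap_mk]
        have h0 : f' (a - (ℓ ^ m) • a'') = 0 := by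
          rw [map_sub, map_nsmul, ha'', hκ', sub_self]
        rw [h0]
        exact (QuotientAddGroup.eq_zero_iff _).mpr (zero_mem _)
      · rw [projMap_mk, QuotientAddGroup.eq_iff_sub_mem]
        have : a - (ℓ ^ m) • a'' - a = -((ℓ ^ m) • a'') := by abel
        rw [this]
        exact neg_mem ⟨a'', rfl⟩
    obtain ⟨a, ha⟩ := hlift
    refine ⟨a, ?_⟩
    apply Subtype.ext
    funext m
    have h1 : (adicMap ℓ f a).1 m = qMap f (ℓ ^ m) (a.1 m) := rfl
    have h2 : qMap ι (ℓ ^ m) ((adicMap ℓ f' a).1 m) = qMap f (ℓ ^ m) (a.1 m) := by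
      show qMap ι (ℓ ^ m) (qMap f' (ℓ ^ m) (a.1 m)) = qMap f (ℓ ^ m) (a.1 m)
      rw [qMap_comp', hιf']
    rw [h1, ← h2, ha]
    exact (s (op m)).2
  · -- range ⊆ kernel
    rintro ⟨x, rfl⟩
    apply Subtype.ext
    funext m
    show qMap g (ℓ ^ m) (qMap f (ℓ ^ m) (x.1 m)) = (0 : ∀ m : ℕ, E ⧸ nSub E (ℓ ^ m)) m
    rw [qMap_comp', hgf0, qMap_zero]
    rfl
end

section
/- Every topological abelian group A in the class ℰ is topologically isomorphic to a direct product P' × B, where P' is a profinite abelian group and B is a finitely generated abelian group equipped with the discrete topology. (Structure statement for the class ℰ proved in Section 3: replacing F by F/F_tors one may assume F ≅ ℤ^r is free, the projection then admits a continuous section, giving the product decomposition.) -/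
/-- A topological abelian group `A` belongs to the class ℰ if it admits a closed
subgroup `P` which is profinite (compact, Hausdorff and totally disconnected) such
that the quotient `A ⧸ P`, with the quotient topology, is discrete and finitely
generated. -/
def IsClassE (A : Type*) [AddCommGroup A] [TopologicalSpace A] : Prop :=
  ∃ P : AddSubgroup A, IsClosed (P : Set A) ∧ CompactSpace P ∧ T2Space P ∧
    TotallyDisconnectedSpace P ∧ DiscreteTopology (A ⧸ P) ∧ AddGroup.FG (A ⧸ P)

universe u

/-- Every topological abelian group in the class ℰ is topologically isomorphic to a
direct product `P × B` of a profinite abelian group `P` and a finitely generated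
abelian group `B` equipped with the discrete topology. -/
theorem statement_5 (A : Type u) [AddCommGroup A] [TopologicalSpace A]
    [IsTopologicalAddGroup A] (hA : IsClassE A) :
    ∃ (P : Type u) (_ : AddCommGroup P) (_ : TopologicalSpace P)
      (B : Type u) (_ : AddCommGroup B) (_ : TopologicalSpace B),
      IsTopologicalAddGroup P ∧ CompactSpace P ∧ T2Space P ∧
      TotallyDisconnectedSpace P ∧ DiscreteTopology B ∧ AddGroup.FG B ∧
      ∃ e : A ≃+ P × B, Continuous ⇑e ∧ Continuous ⇑e.symm := by
  obtain ⟨P, hPclosed, hPcomp, hPt2, hPtd, hPdisc, hPfg⟩ := hA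
  -- `P` is open since the quotient is discrete
  have hPopen : IsOpen (P : Set A) := by
    have h : (P : Set A) = (QuotientAddGroup.mk : A → A ⧸ P) ⁻¹' {0} := by
      ext x; simp [QuotientAddGroup.eq_zero_iff]
    rw [h]
    exact (isOpen_discrete _).preimage QuotientAddGroup.continuous_mk
  haveI hAt2 : T2Space A := by
    rw [IsTopologicalAddGroup.t2Space_iff_zero_closed]
    have h : ({0} : Set A) = Subtype.val '' ({0} : Set P) := by simp
    rw [h]
    exact hPclosed.isClosedEmbedding_subtypeVal.isClosedMap _ isClosed_singleton
  -- the preimage of the torsion subgroup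
  set T : AddSubgroup (A ⧸ P) := AddCommGroup.torsion (A ⧸ P) with hT
  set A₁ : AddSubgroup A := T.comap (QuotientAddGroup.mk' P) with hA₁def
  have hmemA₁ : ∀ x : A, x ∈ A₁ ↔ IsOfFinAddOrder ((x : A ⧸ P)) := by
    intro x; rfl
  have hPle : P ≤ A₁ := by
    intro x hx
    rw [hmemA₁]
    have : ((x : A ⧸ P)) = 0 := (QuotientAddGroup.eq_zero_iff x).mpr hx
    rw [this]
    exact IsOfFinAddOrder.zero
  have hA₁open : IsOpen (A₁ : Set A) := by
    have h : (A₁ : Set A) = (QuotientAddGroup.mk : A → A ⧸ P) ⁻¹' (T : Set (A ⧸ P)) := rfl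
    rw [h]
    exact (isOpen_discrete _).preimage QuotientAddGroup.continuous_mk
  -- finiteness of the torsion subgroup
  haveI : Module.Finite ℤ (A ⧸ P) := Module.Finite.iff_addGroup_fg.mpr hPfg
  haveI : IsNoetherian ℤ (A ⧸ P) := isNoetherian_of_isNoetherianRing_of_finite ℤ (A ⧸ P)
  haveI hTfin : Finite T := by
    haveI h1 : Module.Finite ℤ (Submodule.torsion ℤ (A ⧸ P)) :=
      Module.Finite.iff_fg.mpr (IsNoetherian.noetherian _)
    have h2 : Finite (Submodule.torsion ℤ (A ⧸ P)) :=
      Module.finite_of_fg_torsion _ Submodule.torsion_isTorsion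
    have h3 : Finite ((Submodule.torsion ℤ (A ⧸ P)).toAddSubgroup) := h2
    rw [Submodule.torsion_int] at h3
    exact h3
  -- compactness of A₁
  have hPcompS : IsCompact (P : Set A) := isCompact_iff_compactSpace.mpr hPcomp
  have hfib : ∀ b : A ⧸ P, IsCompact ((QuotientAddGroup.mk : A → A ⧸ P) ⁻¹' {b}) := by
    intro b
    obtain ⟨x, rfl⟩ := QuotientAddGroup.mk_surjective b
    have h : ((QuotientAddGroup.mk : A → A ⧸ P) ⁻¹' {(x : A ⧸ P)})
        = (fun y => x + y) '' (P : Set A) := by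
      ext y
      simp only [Set.mem_preimage, Set.mem_singleton_iff, Set.image_add_left, Set.mem_preimage,
        SetLike.mem_coe]
      rw [eq_comm]
      exact QuotientAddGroup.eq
    rw [h]
    exact hPcompS.image (continuous_add_left x)
  have hA₁comp : IsCompact (A₁ : Set A) := by
    have h : (A₁ : Set A)
        = ⋃ t ∈ (T : Set (A ⧸ P)), (QuotientAddGroup.mk : A → A ⧸ P) ⁻¹' {t} := by
      ext x
      simp only [Set.mem_iUnion, Set.mem_preimage, Set.mem_singleton_iff, SetLike.mem_coe]
      constructor
      · intro hx; exact ⟨_, hx, rfl⟩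
      · rintro ⟨t, ht, rfl⟩; exact ht
    rw [h]
    have : (T : Set (A ⧸ P)).Finite := Set.toFinite _
    exact this.isCompact_biUnion fun t _ => hfib t
  -- total disconnectedness of A₁
  have hPtdS : IsTotallyDisconnected (P : Set A) := totallyDisconnectedSpace_subtype_iff.mp hPtd
  haveI hA₁td : TotallyDisconnectedSpace A₁ := by
    refine (totallyDisconnectedSpace_subtype_iff (s := (A₁ : Set A))).mpr ?_
    intro S hSsub hSconn x hx y hy
    have himg : ((QuotientAddGroup.mk : A → A ⧸ P) '' S).Subsingleton := by
      have hpre : IsPreconnected ((QuotientAddGroup.mk : A → A ⧸ P) '' S) :=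
        hSconn.image _ (QuotientAddGroup.continuous_mk).continuousOn
      exact isTotallyDisconnected_of_totallyDisconnectedSpace _ _ subset_rfl hpre
    -- all elements of S are congruent to x mod P
    have hcong : ∀ z ∈ S, z - x ∈ P := by
      intro z hz
      have : ((z : A ⧸ P)) = ((x : A ⧸ P)) :=
        himg ⟨z, hz, rfl⟩ ⟨x, hx, rfl⟩
      have h' : -z + x ∈ P := QuotientAddGroup.eq.mp this
      have h'' : x - z ∈ P := by rwa [neg_add_eq_sub] at h'
      rw [← neg_sub x z]
      exact P.neg_mem h''
    have himg2 : ((fun z => z - x) '' S).Subsingleton := by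
      refine hPtdS _ ?_ (hSconn.image _ (continuous_sub_right x).continuousOn)
      rintro _ ⟨z, hz, rfl⟩
      exact hcong z hz
    have : y - x = x - x := himg2 ⟨y, hy, rfl⟩ ⟨x, hx, rfl⟩
    have := sub_left_injective this
    exact this.symm
  -- the quotient B
  haveI hBdisc : DiscreteTopology (A ⧸ A₁) := QuotientAddGroup.discreteTopology hA₁open
  have hBfg : AddGroup.FG (A ⧸ A₁) := by
    haveI := hPfg
    have hsurj : Function.Surjective
        (QuotientAddGroup.map P A₁ (AddMonoidHom.id A) hPle) := by
      intro b
      obtain ⟨x, rfl⟩ := QuotientAddGroup.mk_surjective b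
      exact ⟨(x : A ⧸ P), rfl⟩
    exact AddGroup.fg_of_surjective hsurj
  -- B is torsion-free, hence free
  haveI : Module.Finite ℤ (A ⧸ A₁) := Module.Finite.iff_addGroup_fg.mpr hBfg
  haveI : NoZeroSMulDivisors ℤ (A ⧸ A₁) := by
    refine ⟨fun {n} {b} hnb => ?_⟩
    by_cases hn : n = 0
    · exact Or.inl hn
    right
    obtain ⟨x, rfl⟩ := QuotientAddGroup.mk_surjective b
    have h1 : ((n • x : A) : A ⧸ A₁) = 0 := by
      rw [← hnb]; rfl
    have h2 : (n • x) ∈ A₁ := (QuotientAddGroup.eq_zero_iff _).mp h1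
    rw [hmemA₁] at h2
    have h3 : IsOfFinAddOrder (n • (x : A ⧸ P)) := by
      have : ((n • x : A) : A ⧸ P) = n • ((x : A ⧸ P)) := by
        exact map_zsmul (QuotientAddGroup.mk' P) n x
      rwa [this] at h2
    have h4 : IsOfFinAddOrder ((x : A ⧸ P)) := by
      rw [isOfFinAddOrder_iff_zsmul_eq_zero] at h3 ⊢
      obtain ⟨m, hm, hm'⟩ := h3
      exact ⟨m * n, mul_ne_zero hm hn, by rwa [mul_smul]⟩
    have h5 : x ∈ A₁ := (hmemA₁ x).mpr h4
    exact (QuotientAddGroup.eq_zero_iff _).mpr h5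
  haveI : Module.Free ℤ (A ⧸ A₁) := Module.free_of_finite_type_torsion_free'
  -- splitting of the projection
  have hπsurj : Function.Surjective ((QuotientAddGroup.mk' A₁).toIntLinearMap) :=
    QuotientAddGroup.mk'_surjective A₁
  obtain ⟨s, hs⟩ := Module.projective_lifting_property
    ((QuotientAddGroup.mk' A₁).toIntLinearMap) LinearMap.id hπsurj
  set π : A →+ A ⧸ A₁ := QuotientAddGroup.mk' A₁ with hπdef
  set σ : A ⧸ A₁ →+ A := s.toAddMonoidHom with hσdef
  have hsec : ∀ b : A ⧸ A₁, π (σ b) = b := fun b => congrArg (fun f => f b) hs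
  have hker : ∀ a : A, π a = 0 ↔ a ∈ A₁ := fun a => QuotientAddGroup.eq_zero_iff a
  have hmem : ∀ a : A, a - σ (π a) ∈ A₁ := by
    intro a
    rw [← hker]
    rw [map_sub, hsec, sub_self]
  -- the topological isomorphism
  let e : A ≃+ A₁ × (A ⧸ A₁) :=
  { toFun := fun a => (⟨a - σ (π a), hmem a⟩, π a)
    invFun := fun pb => (pb.1 : A) + σ pb.2
    left_inv := by
      intro a
      simp only [sub_add_cancel]
    right_inv := by
      rintro ⟨p, b⟩
      have hπp : π (p : A) = 0 := (hker _).mpr p.2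
      have hb : π ((p : A) + σ b) = b := by
        rw [map_add, hπp, hsec, zero_add]
      refine Prod.ext ?_ ?_
      · apply Subtype.ext
        simp only [hb, add_sub_cancel_right]
      · simpa using hb
    map_add' := by
      intro a b
      refine Prod.ext ?_ ?_
      · apply Subtype.ext
        show (a + b) - σ (π (a + b)) = (a - σ (π a)) + (b - σ (π b))
        rw [map_add, map_add]
        abel
      · show π (a + b) = π a + π b
        rw [map_add] }
  have hπcont : Continuous π := QuotientAddGroup.continuous_mk
  have hσcont : Continuous σ := continuous_of_discreteTopology
  refine ⟨A₁, inferInstance, inferInstance, A ⧸ A₁, inferInstance, inferInstance,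
    inferInstance, isCompact_iff_compactSpace.mp hA₁comp, inferInstance, hA₁td, hBdisc, hBfg,
    e, ?_, ?_⟩
  · show Continuous fun a : A => ((⟨a - σ (π a), hmem a⟩ : A₁), π a)
    exact Continuous.prodMk
      (Continuous.subtype_mk (continuous_id.sub (hσcont.comp hπcont)) _) hπcont
  · show Continuous fun pb : A₁ × (A ⧸ A₁) => ((pb.1 : A) + σ pb.2)
    exact (continuous_subtype_val.comp continuous_fst).add (hσcont.comp continuous_snd)
end

section
/- If P is a profinite abelian topological group (compact, Hausdorff and totally disconnected), then the natural map P → P_∧ := lim_{n≥1} P/nP is an isomorphism of abelian groups. (Claim 'If A is profinite, then A = A_∧ = A^∧' of Section 3.) -/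
/-- The completion `A_∧ = lim_{n ≥ 1} A/nA`, the inverse limit over positive integers
ordered by divisibility, as the subgroup of compatible families. -/
def nCompl (A : Type*) [AddCommGroup A] :
    AddSubgroup (∀ n : ℕ+, A ⧸ nSub A (n : ℕ)) where
  carrier := {f | ∀ (n m : ℕ+) (h : (n : ℕ) ∣ (m : ℕ)), projMap h (f m) = f n}
  zero_mem' := fun _n _m _h => map_zero _
  add_mem' := by
    intro f g hf hg n m h
    simp only [Pi.add_apply, map_add, hf n m h, hg n m h]
  neg_mem' := by
    intro f hf n m h
    simp only [Pi.neg_apply, map_neg, hf n m h]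

/-- The natural map `A → A_∧` sending `a` to its family of residues. -/
def toCompl (A : Type*) [AddCommGroup A] : A →+ ↥(nCompl A) where
  toFun a := ⟨fun _n => QuotientAddGroup.mk a, fun _n _m _h => rfl⟩
  map_zero' := rfl
  map_add' _a _b := rfl


lemma nSub_isClosed (P : Type*) [AddCommGroup P] [TopologicalSpace P]
    [IsTopologicalAddGroup P] [CompactSpace P] [T2Space P] (n : ℕ) :
    IsClosed ((nSub P n : Set P)) := by
  have h : ((nSub P n : Set P)) = (fun a : P => n • a) '' Set.univ := by
    simp [nSub, Set.image_univ]; rfl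
  rw [h]
  exact (isCompact_univ.image (continuous_nsmul n)).isClosed

lemma mk_mem_nSub_proj {A : Type*} [AddCommGroup A] {n m : ℕ} (h : n ∣ m) (a : A) :
    projMap h (QuotientAddGroup.mk a : A ⧸ nSub A m) = QuotientAddGroup.mk a :=
  rfl

/-- If P is a profinite abelian topological group, then the natural map
`P → P_∧ = lim_{n ≥ 1} P/nP` is an isomorphism of abelian groups. -/
theorem statement_6 (P : Type*) [AddCommGroup P] [TopologicalSpace P]
    [IsTopologicalAddGroup P] [CompactSpace P] [T2Space P] [TotallyDisconnectedSpace P] :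
    Function.Bijective ⇑(toCompl P) := by
  constructor
  · rw [injective_iff_map_eq_zero]
    intro a ha
    have han : ∀ n : ℕ+, a ∈ nSub P (n : ℕ) := by
      intro n
      have h1 : (QuotientAddGroup.mk a : P ⧸ nSub P (n : ℕ)) = 0 :=
        congrArg (fun g : ↥(nCompl P) => (g : ∀ k : ℕ+, P ⧸ nSub P (k : ℕ)) n) ha
      exact (QuotientAddGroup.eq_zero_iff a).mp h1
    by_contra hne
    have hmem : ({a}ᶜ : Set P) ∈ nhds (0 : P) :=
      isOpen_compl_singleton.mem_nhds (by simpa using fun h => hne h.symm)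
    obtain ⟨W, ⟨hW0, hWc⟩, hWsub⟩ := (nhds_basis_clopen (0 : P)).mem_iff.mp hmem
    obtain ⟨H, hH⟩ :=
      IsTopologicalAddGroup.exist_openAddSubgroup_sub_clopen_nhds_of_zero hWc hW0
    haveI : Finite (P ⧸ H.toAddSubgroup) :=
      AddSubgroup.quotient_finite_of_isOpen _ H.isOpen
    haveI : H.toAddSubgroup.FiniteIndex := AddSubgroup.finiteIndex_of_finite_quotient
    have hm : H.toAddSubgroup.index ≠ 0 := AddSubgroup.FiniteIndex.index_ne_zero
    have haH : a ∈ H.toAddSubgroup := by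
      obtain ⟨b, hb⟩ := han ⟨H.toAddSubgroup.index, Nat.pos_of_ne_zero hm⟩
      rw [← hb]
      exact AddSubgroup.nsmul_index_mem _ b
    exact hWsub (hH haH) rfl
  · rintro ⟨f, hf⟩
    set C : ℕ+ → Set P :=
      fun n => {a : P | (QuotientAddGroup.mk a : P ⧸ nSub P (n : ℕ)) = f n} with hC
    have hCne : ∀ n, (C n).Nonempty := by
      intro n
      obtain ⟨b, hb⟩ := QuotientAddGroup.mk_surjective (f n)
      exact ⟨b, hb⟩
    have hCcl : ∀ n, IsClosed (C n) := by
      intro n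
      obtain ⟨b, hb⟩ := QuotientAddGroup.mk_surjective (f n)
      have heq : C n = (fun a : P => a - b) ⁻¹' (nSub P (n : ℕ) : Set P) := by
        ext a
        simp only [hC, Set.mem_setOf_eq, Set.mem_preimage, SetLike.mem_coe, ← hb]
        exact ⟨fun h => (QuotientAddGroup.eq_iff_sub_mem).mp h,
          fun h => (QuotientAddGroup.eq_iff_sub_mem).mpr h⟩
      rw [heq]
      exact (nSub_isClosed P n).preimage (continuous_id.sub continuous_const)
    have hsub : ∀ {n m : ℕ+} (h : (n : ℕ) ∣ (m : ℕ)), C m ⊆ C n := by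
      intro n m h a ha
      have : projMap h (f m) = f n := hf n m h
      rw [hC]
      simp only [Set.mem_setOf_eq] at ha ⊢
      rw [← this, ← ha, mk_mem_nSub_proj h a]
    have hdir : Directed (· ⊇ ·) C := by
      intro n m
      refine ⟨n * m, hsub ⟨(m : ℕ), by push_cast; ring⟩, hsub ⟨(n : ℕ), by push_cast; ring⟩⟩
    obtain ⟨a, ha⟩ := IsCompact.nonempty_iInter_of_directed_nonempty_isCompact_isClosed
      C hdir hCne (fun n => (hCcl n).isCompact) hCcl
    refine ⟨a, ?_⟩
    apply Subtype.ext
    funext n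
    exact Set.mem_iInter.mp ha n
end

section
/- Let A be a topological abelian group in the class ℰ and let H be a closed subgroup of A. Then H, equipped with the subspace topology, is again in the class ℰ. (Stability claim for the class ℰ of Section 3.) -/
/-- A closed subgroup of a topological abelian group in the class ℰ is again in the
class ℰ (with the subspace topology). -/
theorem statement_8 (A : Type*) [AddCommGroup A] [TopologicalSpace A]
    [IsTopologicalAddGroup A] (hA : IsClassE A) (H : AddSubgroup A)
    (hH : IsClosed (H : Set A)) :
    IsClassE H := by
  obtain ⟨P, hPclosed, hPc, hPt2, hPtd, hPdisc, hPfg⟩ := hA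
  -- `P` is open in `A` since the quotient is discrete
  have hPopen : IsOpen (P : Set A) := by
    have h0 : IsOpen ({(0 : A ⧸ P)} : Set (A ⧸ P)) := isOpen_discrete _
    have : (P : Set A) = QuotientAddGroup.mk ⁻¹' ({(0 : A ⧸ P)} : Set (A ⧸ P)) := by
      ext x
      simp [QuotientAddGroup.eq_zero_iff]
    rw [this]
    exact h0.preimage continuous_quot_mk
  set P' : AddSubgroup H := P.addSubgroupOf H with hP'def
  have hP'set : (P' : Set H) = Subtype.val ⁻¹' (P : Set A) := rfl
  -- the natural map P' → P
  have hmem : ∀ x : P', ((x : H) : A) ∈ (P : Set A) := fun x => x.2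
  set f : P' → P := fun x => ⟨((x : H) : A), hmem x⟩ with hfdef
  have hfe : Topology.IsEmbedding f := by
    have hcomp : (Subtype.val : P → A) ∘ f = (Subtype.val : H → A) ∘ (Subtype.val : P' → H) :=
      rfl
    have hind : Topology.IsInducing ((Subtype.val : P → A) ∘ f) := by
      rw [hcomp]
      exact Topology.IsInducing.subtypeVal.comp Topology.IsInducing.subtypeVal
    have hcont : Continuous f := by
      have : Continuous ((Subtype.val : H → A) ∘ (Subtype.val : P' → H)) :=
        continuous_subtype_val.comp continuous_subtype_val
      exact Continuous.subtype_mk this _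
    refine ⟨Topology.IsInducing.of_comp hcont continuous_subtype_val hind, ?_⟩
    intro x y hxy
    apply Subtype.ext
    apply Subtype.ext
    exact congrArg (Subtype.val : P → A) hxy
  refine ⟨P', ?_, ?_, ?_, ?_, ?_, ?_⟩
  · rw [hP'set]; exact hPclosed.preimage continuous_subtype_val
  · -- compactness: f is a closed embedding into the compact space P
    have hrange : Set.range f = (Subtype.val : P → A) ⁻¹' (H : Set A) := by
      ext p
      constructor
      · rintro ⟨x, rfl⟩; exact (x : H).2
      · intro hp; exact ⟨⟨⟨(p : A), hp⟩, p.2⟩, rfl⟩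
    have hclosed : IsClosed (Set.range f) := by
      rw [hrange]; exact hH.preimage continuous_subtype_val
    exact (Topology.IsClosedEmbedding.mk hfe hclosed).compactSpace
  · exact hfe.t2Space
  · exact hfe.isTotallyDisconnected_range.mp
      (isTotallyDisconnected_of_totallyDisconnectedSpace _)
  · exact QuotientAddGroup.discreteTopology (N := P') (hPopen.preimage continuous_subtype_val)
  · -- finite generation: H ⧸ P' injects into A ⧸ P which is f.g. over the Noetherian ring ℤ
    have hle : P' ≤ P.comap H.subtype := le_refl _
    set φ : H ⧸ P' →+ A ⧸ P := QuotientAddGroup.map P' P H.subtype hle with hφ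
    have hφinj : Function.Injective φ := by
      rw [injective_iff_map_eq_zero]
      intro a ha
      induction a using QuotientAddGroup.induction_on with
      | H x =>
        rw [QuotientAddGroup.eq_zero_iff]
        have : ((x : A) : A ⧸ P) = 0 := ha
        rw [QuotientAddGroup.eq_zero_iff] at this
        exact this
    haveI : Module.Finite ℤ (A ⧸ P) := Module.Finite.iff_addGroup_fg.mpr hPfg
    haveI : Module.Finite ℤ (H ⧸ P') :=
      Module.Finite.of_injective φ.toIntLinearMap hφinj
    exact Module.Finite.iff_addGroup_fg.mp ‹_›
end

section
/- Let A be a topological abelian group in the class ℰ and let H be a closed subgroup of A. Then the quotient A/H, equipped with the quotient topology, is again in the class ℰ. (Stability claim for the class ℰ of Section 3.) -/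
open Pointwise


/-- The quotient of a topological abelian group in the class ℰ by a closed subgroup,
equipped with the quotient topology, is again in the class ℰ. -/
theorem statement_9 (A : Type*) [AddCommGroup A] [TopologicalSpace A]
    [IsTopologicalAddGroup A] (hA : IsClassE A) (H : AddSubgroup A)
    (hH : IsClosed (H : Set A)) :
    IsClassE (A ⧸ H) := by
  obtain ⟨P, hPclosed, hPcomp, hPt2, hPtd, hPdisc, hPfg⟩ := hA
  haveI := hPcomp; haveI := hPt2; haveI := hPtd; haveI := hPdisc; haveI := hPfg
  haveI : IsClosed (H : Set A) := hH
  haveI : T3Space (A ⧸ H) := inferInstance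
  -- the candidate profinite subgroup : the image of P
  set Q : AddSubgroup (A ⧸ H) := P.map (QuotientAddGroup.mk' H) with hQ
  -- P is open in A since A ⧸ P is discrete
  have hPopen : IsOpen (P : Set A) := by
    have h1 : (P : Set A) = (QuotientAddGroup.mk : A → A ⧸ P) ⁻¹' {0} := by
      ext x
      simp [QuotientAddGroup.eq_zero_iff]
    rw [h1]
    exact (isOpen_discrete _).preimage QuotientAddGroup.continuous_mk
  -- basic facts about Q as a set
  have hQset : (Q : Set (A ⧸ H)) = (QuotientAddGroup.mk : A → A ⧸ H) '' (P : Set A) := by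
    rw [hQ, AddSubgroup.coe_map]; rfl
  have hQcompact : IsCompact (Q : Set (A ⧸ H)) := by
    rw [hQset]
    exact (isCompact_iff_compactSpace.mpr hPcomp).image QuotientAddGroup.continuous_mk
  have hQopen : IsOpen (Q : Set (A ⧸ H)) := by
    rw [hQset]
    exact QuotientAddGroup.isOpenMap_coe _ hPopen
  have hQclosed : IsClosed (Q : Set (A ⧸ H)) := hQcompact.isClosed
  haveI hQcs : CompactSpace Q := isCompact_iff_compactSpace.mp hQcompact
  haveI hQt2 : T2Space Q := inferInstance
  -- the canonical continuous surjection φ : P → Q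
  set φ : P → Q := fun p => ⟨QuotientAddGroup.mk (p : A), by
    exact ⟨(p : A), p.2, rfl⟩⟩ with hφ
  have hφcont : Continuous φ :=
    Continuous.subtype_mk (QuotientAddGroup.continuous_mk.comp continuous_subtype_val) _
  have hφsurj : Function.Surjective φ := by
    rintro ⟨q, a, ha, rfl⟩
    exact ⟨⟨a, ha⟩, rfl⟩
  have hφquot : Topology.IsQuotientMap φ := (hφcont.isClosedMap).isQuotientMap hφcont hφsurj
  -- Q is totally separated, hence totally disconnected
  have key : ∀ d : Q, d ≠ 0 → ∃ W : Set Q, IsClopen W ∧ (0 : Q) ∈ W ∧ d ∉ W := by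
    intro d hd
    have hC : IsClosed (φ ⁻¹' {d}) := (isClosed_singleton).preimage hφcont
    have h0 : (0 : P) ∉ φ ⁻¹' {d} := by
      simp only [Set.mem_preimage, Set.mem_singleton_iff]
      intro h
      apply hd
      rw [← h]
      ext
      simp [hφ]
    obtain ⟨V, hVclopen, hV0, hVsub⟩ :=
      compact_exists_isClopen_in_isOpen hC.isOpen_compl h0
    refine ⟨φ '' V, ⟨?_, ?_⟩, ⟨0, hV0, by ext; simp [hφ]⟩, ?_⟩
    · exact ((hVclopen.1.isCompact).image hφcont).isClosed
    · -- open : preimage is V + kernel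
      have hpre : φ ⁻¹' (φ '' V) = V + {p : P | ((p : A) : A ⧸ H) = 0} := by
        ext x
        constructor
        · rintro ⟨v, hv, hvx⟩
          have : ((v : A) : A ⧸ H) = ((x : A) : A ⧸ H) := congrArg Subtype.val hvx
          refine Set.mem_add.mpr ⟨v, hv, x - v, ?_, by abel⟩
          show (((x - v : P) : A) : A ⧸ H) = 0
          push_cast
          rw [QuotientAddGroup.mk_sub, ← this, sub_self]
        · rintro ⟨v, hv, k, hk, rfl⟩
          refine ⟨v, hv, ?_⟩
          ext
          show ((v : A) : A ⧸ H) = (((v + k : P) : A) : A ⧸ H)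
          push_cast
          rw [QuotientAddGroup.mk_add, hk, add_zero]
      rw [← hφquot.isOpen_preimage, hpre]
      exact hVclopen.2.add_right
    · rintro ⟨v, hv, hvd⟩
      exact hVsub hv hvd
  haveI : TotallySeparatedSpace Q := by
    constructor
    intro x _ y _ hxy
    obtain ⟨W, hWclopen, hW0, hWd⟩ := key (x - y) (sub_ne_zero.mpr hxy)
    have hcont : Continuous fun z : Q => z - y := continuous_id.sub continuous_const
    refine ⟨((fun z : Q => z - y) ⁻¹' W)ᶜ, (fun z : Q => z - y) ⁻¹' W,
      (hWclopen.1.preimage hcont).isOpen_compl, hWclopen.2.preimage hcont,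
      fun h => hWd h, by simpa using hW0, by simp, disjoint_compl_left⟩
  haveI hQtd : TotallyDisconnectedSpace Q := TotallySeparatedSpace.totallyDisconnectedSpace Q
  -- discreteness of the quotient
  haveI hdisc : DiscreteTopology ((A ⧸ H) ⧸ Q) := QuotientAddGroup.discreteTopology hQopen
  -- finite generation of the quotient
  have hfg : AddGroup.FG ((A ⧸ H) ⧸ Q) := by
    have hker : ∀ x ∈ P, ((QuotientAddGroup.mk' Q).comp (QuotientAddGroup.mk' H)) x = 0 := by
      intro x hx
      simp only [AddMonoidHom.comp_apply]
      rw [QuotientAddGroup.mk'_apply, QuotientAddGroup.eq_zero_iff]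
      exact ⟨x, hx, rfl⟩
    set ψ := QuotientAddGroup.lift P ((QuotientAddGroup.mk' Q).comp (QuotientAddGroup.mk' H)) hker
    have hψsurj : Function.Surjective ψ := by
      intro z
      obtain ⟨b, rfl⟩ := QuotientAddGroup.mk'_surjective Q z
      obtain ⟨a, rfl⟩ := QuotientAddGroup.mk'_surjective H b
      exact ⟨QuotientAddGroup.mk a, rfl⟩
    exact AddGroup.fg_of_surjective hψsurj
  exact ⟨Q, hQclosed, hQcs, hQt2, hQtd, hdisc, hfg⟩
end

section
/- Let B be a topological abelian group and A a closed subgroup of B such that A, with the subspace topology, is in the class ℰ, and such that the quotient B/A, with the quotient topology, is discrete and finitely generated. Then B is in the class ℰ. (Stability of ℰ under topological extension by a finitely generated discrete group, Section 3.) -/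
/-- An abelian group is finitely generated if it has a finitely generated subgroup
with finitely generated quotient. -/
lemma addGroup_fg_of_fg_of_quotient_fg {G : Type*} [AddCommGroup G] (H : AddSubgroup G)
    (h1 : AddGroup.FG H) (h2 : AddGroup.FG (G ⧸ H)) : AddGroup.FG G := by
  obtain ⟨S, hS, hSfin⟩ := AddGroup.fg_iff.mp h2
  obtain ⟨T, hT, hTfin⟩ := AddGroup.fg_iff.mp h1
  set S' : Set G := Quotient.out '' S with hS'def
  set T' : Set G := ⇑H.subtype '' T with hT'def
  have hHT' : AddSubgroup.closure T' = H := by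
    rw [hT'def, ← AddMonoidHom.map_closure, hT]
    rw [← AddMonoidHom.range_eq_map]
    exact AddSubgroup.range_subtype H
  set K := AddSubgroup.closure (S' ∪ T') with hK
  have hHK : H ≤ K := by
    rw [← hHT']
    exact AddSubgroup.closure_mono Set.subset_union_right
  have hmap : K.map (QuotientAddGroup.mk' H) = ⊤ := by
    rw [hK, AddMonoidHom.map_closure]
    rw [eq_top_iff, ← hS]
    apply AddSubgroup.closure_mono
    intro s hs
    refine ⟨s.out, Or.inl ⟨s, hs, rfl⟩, ?_⟩
    simpa using Quotient.out_eq s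
  have hKtop : K = ⊤ := by
    have := AddSubgroup.comap_map_eq (QuotientAddGroup.mk' H) K
    rw [hmap, QuotientAddGroup.ker_mk'] at this
    rw [AddSubgroup.comap_top] at this
    exact (this.trans (sup_eq_left.mpr hHK)).symm
  exact AddGroup.fg_iff.mpr ⟨S' ∪ T', hKtop ▸ hK.symm,
    (hSfin.image _).union (hTfin.image _)⟩

/-- If `B` is a topological abelian group and `A` is a closed subgroup of `B` which is
in the class ℰ (with the subspace topology), and the quotient `B/A` (with the quotient
topology) is discrete and finitely generated, then `B` is in the class ℰ. -/
theorem statement_10 (B : Type*) [AddCommGroup B] [TopologicalSpace B]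
    [IsTopologicalAddGroup B] (A : AddSubgroup B) (hA : IsClosed (A : Set B))
    (hAE : IsClassE A) (hdisc : DiscreteTopology (B ⧸ A)) (hfg : AddGroup.FG (B ⧸ A)) :
    IsClassE B := by
  obtain ⟨P, hPclosed, hPcpt, hPt2, hPtd, hPdisc, hPfg⟩ := hAE
  set Q : AddSubgroup B := P.map A.subtype with hQdef
  have hQle : Q ≤ A := by
    rintro x ⟨p, hp, rfl⟩; exact p.2
  -- the set underlying Q
  have hQset : (Q : Set B) = Subtype.val '' (P : Set A) := by
    ext x; simp [hQdef]
  -- A is open in B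
  have hAopen : IsOpen (A : Set B) := by
    have h0 : IsOpen ({(0 : B ⧸ A)} : Set (B ⧸ A)) := isOpen_discrete _
    have : (A : Set B) = QuotientAddGroup.mk ⁻¹' ({0} : Set (B ⧸ A)) := by
      ext b; simp [QuotientAddGroup.eq_zero_iff]
    rw [this]
    exact h0.preimage continuous_quot_mk
  -- P is open in A
  have hPopen : IsOpen (P : Set A) := by
    have h0 : IsOpen ({(0 : A ⧸ P)} : Set (A ⧸ P)) := isOpen_discrete _
    have : (P : Set A) = QuotientAddGroup.mk ⁻¹' ({0} : Set (A ⧸ P)) := by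
      ext a; simp [QuotientAddGroup.eq_zero_iff]
    rw [this]
    exact h0.preimage continuous_quot_mk
  -- Q is open in B
  have hQopen : IsOpen (Q : Set B) := by
    rw [hQset]
    exact hAopen.isOpenMap_subtype_val _ hPopen
  -- the inclusion P → B is an embedding with range Q
  have hf : Topology.IsEmbedding (fun p : P => ((p : A) : B)) :=
    Topology.IsEmbedding.subtypeVal.comp Topology.IsEmbedding.subtypeVal
  have hrange : Set.range (fun p : P => ((p : A) : B)) = (Q : Set B) := by
    rw [hQset]
    ext x
    constructor
    · rintro ⟨p, rfl⟩; exact ⟨p, p.2, rfl⟩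
    · rintro ⟨a, ha, rfl⟩; exact ⟨⟨a, ha⟩, rfl⟩
  let e : P ≃ₜ Q :=
    hf.toHomeomorph.trans (Homeomorph.setCongr hrange)
  refine ⟨Q, ?_, ?_, ?_, ?_, ?_, ?_⟩
  · exact AddSubgroup.isClosed_of_isOpen Q hQopen
  · exact e.compactSpace
  · exact e.symm.isEmbedding.t2Space
  · exact e.symm.isEmbedding.isTotallyDisconnected_range.mp
      (fun t _ ht => TotallyDisconnectedSpace.isTotallyDisconnected_univ t (Set.subset_univ t) ht)
  · exact QuotientAddGroup.discreteTopology hQopen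
  · -- finite generation of B ⧸ Q
    have hmap : A.map (QuotientAddGroup.mk' Q) =
        (QuotientAddGroup.map P Q A.subtype (fun p hp => ⟨p, hp, rfl⟩ : P ≤ Q.comap A.subtype)).range := by
      ext x
      constructor
      · rintro ⟨a, ha, rfl⟩
        exact ⟨QuotientAddGroup.mk ⟨a, ha⟩, rfl⟩
      · rintro ⟨y, rfl⟩
        induction y using QuotientAddGroup.induction_on with
        | H a => exact ⟨a, a.2, rfl⟩
    have h1 : AddGroup.FG (A.map (QuotientAddGroup.mk' Q)) := by
      rw [hmap]
      infer_instance
    have h2 : AddGroup.FG ((B ⧸ Q) ⧸ A.map (QuotientAddGroup.mk' Q)) := by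
      have equiv := QuotientAddGroup.quotientQuotientEquivQuotient Q A hQle
      exact AddGroup.fg_of_surjective (f := equiv.symm.toAddMonoidHom) equiv.symm.surjective
    exact addGroup_fg_of_fg_of_quotient_fg _ h1 h2
end
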